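/- Let μ ∈ ℝ, B > 0, s > 0, r > 0, k ∈ ℝ and let α : ℝ → ℝ be continuous. Let U ⊆ ℝ be a nonempty open interval and let v : ℝ → ℝ be continuous on U. Assume v is a viscosity solution on U of the linear equation (μB − α((k−x)⁺))·v'(x) + (s²/2)·v''(x) − r·v(x) = 0, meaning: for every x₀ ∈ U and every twice continuously differentiable φ : ℝ → ℝ, if x₀ is a local minimum of v − φ then (μB − α((k−x₀)⁺))·φ'(x₀) + (s²/2)·φ''(x₀) − r·v(x₀) ≤ 0, and if x₀ is a local maximum of v − φ then (μB − α((k−x₀)⁺))·φ'(x₀) + (s²/2)·φ''(x₀) − r·v(x₀) ≥ 0. Then v is twice continuously differentiable on U. -/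

import Mathlib

open Set Metric Filter
open scoped NNReal Topology

section ODEglobal
variable {E : Type*} [NormedAddCommGroup E] [NormedSpace ℝ E] [CompleteSpace E]

/-- One Picard–Lindelöf step of uniform length `(2K+1)⁻¹` for a field that is
`K`-Lipschitz in space and vanishes at `0`. -/
lemma ode_step {F : ℝ → E → E} {K : ℝ≥0}
    (hlip : ∀ t, LipschitzWith K (F t))
    (hcont : ∀ x, Continuous fun t => F t x)
    (hF0 : ∀ t, F t 0 = 0) (t₀ : ℝ) (y₀ : E) :
    ∃ z : ℝ → E, z t₀ = y₀ ∧ ∀ t ∈ Icc t₀ (t₀ + (2*(K:ℝ)+1)⁻¹),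
      HasDerivWithinAt z (F t (z t)) (Icc t₀ (t₀ + (2*(K:ℝ)+1)⁻¹)) t := by
  have hKpos : (0:ℝ) < 2*(K:ℝ)+1 := by positivity
  have hτ : (0:ℝ) < (2*(K:ℝ)+1)⁻¹ := by positivity
  have hpl : IsPicardLindelof F (tmin := t₀) (tmax := t₀ + (2*(K:ℝ)+1)⁻¹)
      ⟨t₀, le_rfl, by linarith⟩ y₀ (‖y₀‖₊+1) 0 (2*K*(‖y₀‖₊+1)) K := by
    constructor
    · exact fun t _ => (hlip t).lipschitzOnWith
    · exact fun x _ => (hcont x).continuousOn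
    · intro t _ x hx
      rw [mem_closedBall_iff_norm] at hx
      push_cast at hx ⊢
      have h1 : ‖F t x‖ = ‖F t x - F t 0‖ := by rw [hF0, sub_zero]
      have h2 : ‖F t x - F t 0‖ ≤ K * ‖x - 0‖ := by
        simpa [dist_eq_norm] using (hlip t).dist_le_mul x 0
      have h3 : ‖x‖ ≤ ‖y₀‖ + (‖y₀‖+1) := by
        have : ‖x‖ ≤ ‖x - y₀‖ + ‖y₀‖ := by simpa using norm_add_le (x - y₀) y₀
        linarith
      rw [h1]
      calc ‖F t x - F t 0‖ ≤ K * ‖x - 0‖ := h2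
        _ = K * ‖x‖ := by rw [sub_zero]
        _ ≤ K * (2*(‖y₀‖+1)) := by
            apply mul_le_mul_of_nonneg_left _ K.coe_nonneg
            linarith
        _ = 2*(K:ℝ)*(‖y₀‖+1) := by ring
    · show ((2*K*(‖y₀‖₊+1) : ℝ≥0) : ℝ) * max (t₀ + (2*(K:ℝ)+1)⁻¹ - t₀) (t₀ - t₀)
          ≤ ((‖y₀‖₊+1 : ℝ≥0) : ℝ) - ((0 : ℝ≥0) : ℝ)
      have : max (t₀ + (2*(K:ℝ)+1)⁻¹ - t₀) (t₀ - t₀) = (2*(K:ℝ)+1)⁻¹ := by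
        rw [add_sub_cancel_left, sub_self, max_eq_left hτ.le]
      rw [this]
      push_cast
      rw [sub_zero]
      have h2K : 2*(K:ℝ) * (2*(K:ℝ)+1)⁻¹ ≤ 1 := by
        rw [mul_inv_le_iff₀ hKpos, one_mul]; linarith
      have hy : (0:ℝ) ≤ ‖y₀‖ + 1 := by positivity
      calc 2*(K:ℝ)*(‖y₀‖+1) * (2*(K:ℝ)+1)⁻¹
          = (2*(K:ℝ) * (2*(K:ℝ)+1)⁻¹) * (‖y₀‖+1) := by ring
        _ ≤ 1 * (‖y₀‖+1) := by apply mul_le_mul_of_nonneg_right h2K hy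
        _ = ‖y₀‖+1 := one_mul _
  exact hpl.exists_eq_forall_mem_Icc_hasDerivWithinAt₀

/-- Agreement of two solutions on a common interval (Gronwall uniqueness). -/
lemma ode_agree {F : ℝ → E → E} {K : ℝ≥0}
    (hlip : ∀ t, LipschitzWith K (F t))
    {a c₁ c₂ : ℝ} {y₀ : E} {Y₁ Y₂ : ℝ → E}
    (h₁a : Y₁ a = y₀) (h₂a : Y₂ a = y₀)
    (h₁ : ∀ t ∈ Icc a c₁, HasDerivWithinAt Y₁ (F t (Y₁ t)) (Icc a c₁) t)
    (h₂ : ∀ t ∈ Icc a c₂, HasDerivWithinAt Y₂ (F t (Y₂ t)) (Icc a c₂) t)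
    {t : ℝ} (ht : t ∈ Icc a (min c₁ c₂)) : Y₁ t = Y₂ t := by
  set m := min c₁ c₂
  have hm1 : Icc a m ⊆ Icc a c₁ := Icc_subset_Icc le_rfl (min_le_left _ _)
  have hm2 : Icc a m ⊆ Icc a c₂ := Icc_subset_Icc le_rfl (min_le_right _ _)
  have key : ∀ (Y : ℝ → E), (∀ u ∈ Icc a m, HasDerivWithinAt Y (F u (Y u)) (Icc a m) u) →
      (ContinuousOn Y (Icc a m) ∧
       ∀ u ∈ Ico a m, HasDerivWithinAt Y (F u (Y u)) (Ici u) u) := by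
    intro Y hY
    refine ⟨fun u hu => (hY u hu).continuousWithinAt, fun u hu => ?_⟩
    have h1 : HasDerivWithinAt Y (F u (Y u)) (Ici u ∩ Iic m) u := by
      refine (hY u (Ico_subset_Icc_self hu)).mono ?_
      exact fun x hx => ⟨hu.1.trans hx.1, hx.2⟩
    rw [← hasDerivWithinAt_inter (Iic_mem_nhds hu.2)]
    exact h1
  have k1 := key Y₁ (fun u hu => (h₁ u (hm1 hu)).mono hm1)
  have k2 := key Y₂ (fun u hu => (h₂ u (hm2 hu)).mono hm2)
  exact ODE_solution_unique_of_mem_Icc_right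
    (fun t _ => (hlip t).lipschitzOnWith (s := univ))
    k1.1 k1.2 (fun _ _ => mem_univ _) k2.1 k2.2 (fun _ _ => mem_univ _)
    (h₁a.trans h₂a.symm) ht

/-- Forward global existence on `Ici a`. -/
lemma ode_forward {F : ℝ → E → E} {K : ℝ≥0}
    (hlip : ∀ t, LipschitzWith K (F t))
    (hcont : ∀ x, Continuous fun t => F t x)
    (hF0 : ∀ t, F t 0 = 0) (a : ℝ) (y₀ : E) :
    ∃ Y : ℝ → E, Y a = y₀ ∧ ∀ t ∈ Ici a, HasDerivWithinAt Y (F t (Y t)) (Ici a) t := by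
  set τ : ℝ := (2*(K:ℝ)+1)⁻¹ with hτdef
  have hτ : (0:ℝ) < τ := by positivity
  have Q : ∀ n : ℕ, ∃ Y : ℝ → E, Y a = y₀ ∧
      ∀ t ∈ Icc a (a + n*τ), HasDerivWithinAt Y (F t (Y t)) (Icc a (a + n*τ)) t := by
    intro n
    induction n with
    | zero =>
        obtain ⟨z, hz0, hz⟩ := ode_step hlip hcont hF0 a y₀
        refine ⟨z, hz0, fun t ht => ?_⟩
        have hsub : Icc a (a + (0:ℕ)*τ) ⊆ Icc a (a + τ) := by
          apply Icc_subset_Icc le_rfl; push_cast; linarith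
        exact ((hz t (hsub ht)).mono hsub)
    | succ n ih =>
        obtain ⟨Y, hYa, hY⟩ := ih
        set c : ℝ := a + n*τ with hcdef
        have hac : a ≤ c := by
          have : (0:ℝ) ≤ n*τ := by positivity
          linarith
        obtain ⟨z, hzc, hz⟩ := ode_step hlip hcont hF0 c (Y c)
        set W : ℝ → E := fun t => if t ≤ c then Y t else z t with hWdef
        have hcc : Icc a (a + (n+1:ℕ)*τ) = Icc a c ∪ Icc c (c+τ) := by
          rw [Icc_union_Icc_eq_Icc hac (by linarith)]
          congr 1
          push_cast; ring
        have heq1 : EqOn W Y (Icc a c) := by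
          intro u hu; simp only [hWdef, if_pos hu.2]
        have heq2 : EqOn W z (Icc c (c+τ)) := by
          intro u hu
          rcases eq_or_lt_of_le hu.1 with h | h
          · simp only [hWdef, ← h, if_pos le_rfl, hzc]
          · simp only [hWdef, if_neg (not_le.mpr h)]
        refine ⟨W, by simp only [hWdef, if_pos hac, hYa], fun t ht => ?_⟩
        rw [hcc] at ht ⊢
        rcases lt_trichotomy t c with h | h | h
        · -- t < c
          have htc : t ∈ Icc a c := by
            rcases ht with h' | h'
            · exact h'
            · exact absurd h'.1 (not_le.mpr h)
          have h1 : HasDerivWithinAt W (F t (W t)) (Icc a c) t := by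
            rw [heq1 htc]
            exact (hY t htc).congr heq1 (heq1 htc)
          rw [← hasDerivWithinAt_inter (Iio_mem_nhds h)]
          refine h1.mono fun x hx => ?_
          rcases hx.1 with h' | h'
          · exact h'
          · exact absurd h'.1 (not_le.mpr hx.2)
        · -- t = c
          have htY : t ∈ Icc a c := ⟨h ▸ hac, h.le⟩
          have htz : t ∈ Icc c (c+τ) := ⟨h.ge, by rw [h]; linarith⟩
          have h1 : HasDerivWithinAt W (F t (W t)) (Icc a c) t := by
            rw [heq1 htY]
            exact (hY t htY).congr heq1 (heq1 htY)
          have h2 : HasDerivWithinAt W (F t (W t)) (Icc c (c+τ)) t := by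
            rw [heq2 htz]
            exact (hz t htz).congr heq2 (heq2 htz)
          exact h1.union h2
        · -- t > c
          have htz : t ∈ Icc c (c+τ) := by
            rcases ht with h' | h'
            · exact absurd h'.2 (not_le.mpr h)
            · exact h'
          have h2 : HasDerivWithinAt W (F t (W t)) (Icc c (c+τ)) t := by
            rw [heq2 htz]
            exact (hz t htz).congr heq2 (heq2 htz)
          rw [← hasDerivWithinAt_inter (Ioi_mem_nhds h)]
          refine h2.mono fun x hx => ?_
          rcases hx.1 with h' | h'
          · exact absurd h'.2 (not_le.mpr hx.2)
          · exact h'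
  choose sol hsol0 hsol using Q
  set N : ℝ → ℕ := fun t => ⌈(t - a)/τ⌉₊ + 1 with hNdef
  have hNle : ∀ t, t ≤ a + (⌈(t - a)/τ⌉₊ : ℝ) * τ := by
    intro t
    have h1 : (t - a)/τ ≤ (⌈(t - a)/τ⌉₊ : ℝ) := Nat.le_ceil _
    have := (div_le_iff₀ hτ).mp h1
    linarith
  have hNlt : ∀ t, t < a + (N t : ℝ) * τ := by
    intro t
    have := hNle t
    have : a + (⌈(t - a)/τ⌉₊ : ℝ) * τ < a + (N t : ℝ) * τ := by
      have : ((⌈(t - a)/τ⌉₊ : ℝ)) < (N t : ℝ) := by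
        simp only [hNdef]; push_cast; linarith
      nlinarith [hτ]
    linarith [hNle t]
  refine ⟨fun t => sol (N t) t, hsol0 _, fun t ht => ?_⟩
  set c : ℝ := a + (N t : ℝ) * τ with hcdef
  have htc : t < c := hNlt t
  have heqY : EqOn (fun u => sol (N u) u) (sol (N t)) (Ici a ∩ Iio c) := by
    intro u hu
    refine ode_agree hlip (hsol0 (N u)) (hsol0 (N t)) (hsol (N u)) (hsol (N t)) ?_
    refine ⟨hu.1, le_min ?_ hu.2.le⟩
    calc u ≤ a + (⌈(u - a)/τ⌉₊ : ℝ) * τ := hNle u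
      _ ≤ a + (N u : ℝ) * τ := by
          have : ((⌈(u - a)/τ⌉₊ : ℝ)) ≤ (N u : ℝ) := by simp only [hNdef]; push_cast; linarith
          nlinarith [hτ]
  have htmem : t ∈ Ici a ∩ Iio c := ⟨ht, htc⟩
  have h1 : HasDerivWithinAt (fun u => sol (N u) u)
      (F t ((fun u => sol (N u) u) t)) (Ici a ∩ Iio c) t := by
    have hsub : Ici a ∩ Iio c ⊆ Icc a c := fun x hx => ⟨hx.1, hx.2.le⟩
    have h0 := ((hsol (N t)) t ⟨ht, htc.le⟩).mono hsub
    have := h0.congr heqY (heqY htmem)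
    simpa [heqY htmem] using this
  rw [← hasDerivWithinAt_inter (Iio_mem_nhds htc)]
  exact h1

/-- Global existence on all of `ℝ` for a field Lipschitz in space, vanishing at `0`. -/
lemma ode_global {F : ℝ → E → E} {K : ℝ≥0}
    (hlip : ∀ t, LipschitzWith K (F t))
    (hcont : ∀ x, Continuous fun t => F t x)
    (hF0 : ∀ t, F t 0 = 0) (a : ℝ) (y₀ : E) :
    ∃ Y : ℝ → E, Y a = y₀ ∧ ∀ t, HasDerivAt Y (F t (Y t)) t := by
  obtain ⟨R, hRa, hR⟩ := ode_forward hlip hcont hF0 a y₀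
  -- time-reversed field
  set G : ℝ → E → E := fun t z => -F (2*a - t) z with hGdef
  have hlipG : ∀ t, LipschitzWith K (G t) := by
    intro t
    apply LipschitzWith.of_dist_le_mul
    intro x y
    have h := (hlip (2*a - t)).dist_le_mul x y
    simp only [hGdef, dist_eq_norm] at h ⊢
    calc ‖-F (2*a-t) x - -F (2*a-t) y‖ = ‖-(F (2*a-t) x - F (2*a-t) y)‖ := by
          congr 1; abel
      _ = ‖F (2*a-t) x - F (2*a-t) y‖ := norm_neg _
      _ ≤ ↑K * ‖x - y‖ := h
  have hcontG : ∀ x, Continuous fun t => G t x := by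
    intro x
    exact ((hcont x).comp (by fun_prop : Continuous fun t : ℝ => 2*a - t)).neg
  have hG0 : ∀ t, G t 0 = 0 := by intro t; simp [hGdef, hF0]
  obtain ⟨Z, hZa, hZ⟩ := ode_forward hlipG hcontG hG0 a y₀
  set L : ℝ → E := fun t => Z (2*a - t) with hLdef
  have hLa : L a = y₀ := by simp only [hLdef]; rw [show 2*a - a = a by ring, hZa]
  have hL : ∀ t ∈ Iic a, HasDerivWithinAt L (F t (L t)) (Iic a) t := by
    intro t ht
    have hmem : 2*a - t ∈ Ici a := by simp only [mem_Ici]; linarith [mem_Iic.mp ht]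
    have hσ : HasDerivWithinAt (fun u : ℝ => 2*a - u) (-1) (Iic a) t := by
      simpa using ((hasDerivAt_id t).const_sub (2*a)).hasDerivWithinAt
    have hmt : MapsTo (fun u : ℝ => 2*a - u) (Iic a) (Ici a) := by
      intro u hu; simp only [mem_Ici]; linarith [mem_Iic.mp hu]
    have hcomp := HasDerivWithinAt.scomp t (hZ (2*a - t) hmem) hσ hmt
    have : ((-1 : ℝ) • G (2*a - t) (Z (2*a - t))) = F t (L t) := by
      simp [hGdef, hLdef, show 2*a - (2*a - t) = t by ring]
    rw [this] at hcomp
    exact hcomp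
  set Y : ℝ → E := fun t => if t ≤ a then L t else R t with hYdef
  have heqL : EqOn Y L (Iic a) := fun u hu => by simp only [hYdef, if_pos (mem_Iic.mp hu)]
  have heqR : EqOn Y R (Ici a) := by
    intro u hu
    rcases eq_or_lt_of_le (mem_Ici.mp hu) with h | h
    · simp only [hYdef, ← h, if_pos le_rfl, hLa, hRa]
    · simp only [hYdef, if_neg (not_le.mpr h)]
  refine ⟨Y, by simp only [hYdef, if_pos le_rfl, hLa], fun t => ?_⟩
  rcases lt_trichotomy t a with h | h | h
  · have h1 : HasDerivWithinAt Y (F t (Y t)) (Iic a) t := by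
      rw [heqL (le_of_lt h : t ≤ a)]
      exact (hL t h.le).congr heqL (heqL h.le)
    exact h1.hasDerivAt (Iic_mem_nhds h)
  · have h1 : HasDerivWithinAt Y (F t (Y t)) (Iic a) t := by
      rw [heqL (le_of_eq h : t ≤ a)]
      exact (hL t h.le).congr heqL (heqL h.le)
    have h2 : HasDerivWithinAt Y (F t (Y t)) (Ici a) t := by
      rw [heqR (ge_of_eq h : t ≥ a)]
      exact (hR t h.ge).congr heqR (heqR h.ge)
    have := h1.union h2
    rwa [Iic_union_Ici, hasDerivWithinAt_univ] at this
  · have h1 : HasDerivWithinAt Y (F t (Y t)) (Ici a) t := by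
      rw [heqR (le_of_lt h : a ≤ t)]
      exact (hR t h.le).congr heqR (heqR h.le)
    exact h1.hasDerivAt (Ici_mem_nhds h)

end ODEglobal


/-- Second derivative test: at a local maximum of a `C²` function the second
derivative is nonpositive. -/
lemma secondDeriv_nonpos_of_isLocalMax {f : ℝ → ℝ} {x : ℝ}
    (hf : ContDiff ℝ 2 f) (h : IsLocalMax f x) : deriv (deriv f) x ≤ 0 := by
  by_contra hpos
  push_neg at hpos
  have hdiff : Differentiable ℝ (deriv f) := by
    have h2 : ContDiff ℝ 1 (deriv f) := by
      have h2 : ContDiff ℝ ((1:ℕ∞) + 1) f := by exact_mod_cast hf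
      exact ((contDiff_succ_iff_deriv (n := 1)).mp h2).2.2
    exact h2.differentiable (by norm_num)
  have hd : HasDerivAt (deriv f) (deriv (deriv f) x) x := (hdiff x).hasDerivAt
  have hderiv0 : deriv f x = 0 := h.deriv_eq_zero
  have hslope : Tendsto (slope (deriv f) x) (𝓝[≠] x) (𝓝 (deriv (deriv f) x)) :=
    hasDerivAt_iff_tendsto_slope.mp hd
  have hev : ∀ᶠ y in 𝓝[≠] x, 0 < slope (deriv f) x y :=
    hslope.eventually (eventually_gt_nhds hpos)
  rw [eventually_nhdsWithin_iff] at hev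
  rw [Metric.eventually_nhds_iff] at hev
  obtain ⟨δ₁, hδ₁, hev⟩ := hev
  have hev2 := h
  rw [IsLocalMax, IsMaxFilter, Metric.eventually_nhds_iff] at hev2
  obtain ⟨δ₂, hδ₂, hev2⟩ := hev2
  set δ := min δ₁ δ₂ with hδdef
  have hδ : 0 < δ := lt_min hδ₁ hδ₂
  have hpos' : ∀ y ∈ Ioo x (x + δ/2), 0 < deriv f y := by
    intro y hy
    have hyx : x < y := hy.1
    have hdist : dist y x < δ₁ := by
      rw [Real.dist_eq, abs_of_pos (by linarith)]
      have : δ/2 < δ₁ := by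
        have := min_le_left δ₁ δ₂; simp only [hδdef] at *; linarith
      linarith [hy.2]
    have hs := hev hdist (ne_of_gt hyx)
    rw [slope_def_field, hderiv0, sub_zero] at hs
    have : 0 < deriv f y / (y - x) := hs
    have hyx' : 0 < y - x := by linarith
    by_contra hc
    push_neg at hc
    nlinarith [div_nonpos_of_nonpos_of_nonneg hc hyx'.le]
  have hmono : StrictMonoOn f (Icc x (x + δ/2)) := by
    apply strictMonoOn_of_deriv_pos (convex_Icc _ _) (hf.continuous.continuousOn)
    intro y hy
    rw [interior_Icc] at hy
    exact hpos' y hy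
  have hlt : f x < f (x + δ/2) := by
    apply hmono (left_mem_Icc.mpr (by linarith)) (right_mem_Icc.mpr (by linarith))
    linarith
  have : f (x + δ/2) ≤ f x := by
    apply hev2
    rw [Real.dist_eq, abs_of_pos (by linarith)]
    have : δ/2 < δ₂ := by
      have := min_le_right δ₁ δ₂; simp only [hδdef] at *; linarith
    linarith
  linarith

/-- Maximum principle for classical solutions of `w'' = c₁ w + g w'` with `c₁ > 0`. -/
lemma linear_max_principle {c₁ : ℝ} (hc₁ : 0 < c₁) {g : ℝ → ℝ} {w : ℝ → ℝ}
    (hw : ContDiff ℝ 2 w)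
    (heq : ∀ t, deriv (deriv w) t = c₁ * w t + g t * deriv w t)
    {a b : ℝ} (hab : a ≤ b) (ha : w a ≤ 0) (hb : w b ≤ 0) :
    ∀ x ∈ Icc a b, w x ≤ 0 := by
  obtain ⟨x₀, hx₀mem, hx₀⟩ := isCompact_Icc.exists_isMaxOn (nonempty_Icc.mpr hab)
    (hw.continuous.continuousOn (s := Icc a b))
  intro x hx
  have hle : w x ≤ w x₀ := hx₀ hx
  by_contra hc
  push_neg at hc
  have hx₀pos : 0 < w x₀ := lt_of_lt_of_le hc hle
  have hx₀Ioo : x₀ ∈ Ioo a b := by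
    rcases eq_or_lt_of_le hx₀mem.1 with h | h
    · exact absurd (h ▸ hx₀pos) (not_lt.mpr ha)
    · rcases eq_or_lt_of_le hx₀mem.2 with h' | h'
      · exact absurd (h' ▸ hx₀pos) (not_lt.mpr hb)
      · exact ⟨h, h'⟩
  have hloc : IsLocalMax w x₀ := hx₀.isLocalMax (Icc_mem_nhds hx₀Ioo.1 hx₀Ioo.2)
  have h1 : deriv w x₀ = 0 := hloc.deriv_eq_zero
  have h2 : deriv (deriv w) x₀ ≤ 0 := secondDeriv_nonpos_of_isLocalMax hw hloc
  rw [heq, h1, mul_zero, add_zero] at h2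
  nlinarith



/-- Existence of a global classical `C²` solution of `w'' = c₁ w + g w'` with
prescribed initial data, for bounded continuous `g`. -/
lemma linear_ode_exists {c₁ : ℝ} {g : ℝ → ℝ} (hg : Continuous g) {M : ℝ}
    (hM : ∀ x, |g x| ≤ M) (a u₀ u₁ : ℝ) :
    ∃ w : ℝ → ℝ, ContDiff ℝ 2 w ∧ w a = u₀ ∧ deriv w a = u₁ ∧
      ∀ t, deriv (deriv w) t = c₁ * w t + g t * deriv w t := by
  have hM0 : 0 ≤ M := (abs_nonneg _).trans (hM a)
  set F : ℝ → ℝ × ℝ → ℝ × ℝ := fun t y => (y.2, c₁ * y.1 + g t * y.2) with hFdef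
  set K : ℝ≥0 := (1 + |c₁| + M).toNNReal with hKdef
  have hKcoe : (K : ℝ) = 1 + |c₁| + M := Real.coe_toNNReal _ (by positivity)
  have hlip : ∀ t, LipschitzWith K (F t) := by
    intro t
    apply LipschitzWith.of_dist_le_mul
    intro y y'
    rw [hKcoe]
    have hD1 : dist y.1 y'.1 ≤ dist y y' := by rw [Prod.dist_eq]; exact le_max_left _ _
    have hD2 : dist y.2 y'.2 ≤ dist y y' := by rw [Prod.dist_eq]; exact le_max_right _ _
    have hD0 : 0 ≤ dist y y' := dist_nonneg
    rw [Prod.dist_eq]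
    apply max_le
    · calc dist (F t y).1 (F t y').1 = dist y.2 y'.2 := rfl
        _ ≤ dist y y' := hD2
        _ ≤ (1 + |c₁| + M) * dist y y' := by nlinarith [abs_nonneg c₁]
    · have : dist (F t y).2 (F t y').2 = |c₁ * (y.1 - y'.1) + g t * (y.2 - y'.2)| := by
        simp only [hFdef, Real.dist_eq]
        congr 1; ring
      rw [this]
      rw [Real.dist_eq] at hD1 hD2
      calc |c₁ * (y.1 - y'.1) + g t * (y.2 - y'.2)|
          ≤ |c₁ * (y.1 - y'.1)| + |g t * (y.2 - y'.2)| := abs_add_le _ _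
        _ = |c₁| * |y.1 - y'.1| + |g t| * |y.2 - y'.2| := by rw [abs_mul, abs_mul]
        _ ≤ |c₁| * dist y y' + M * dist y y' := by
            have h1 := hM t
            have h2 := abs_nonneg (y.1 - y'.1)
            have h3 := abs_nonneg (y.2 - y'.2)
            have := mul_le_mul (le_refl |c₁|) hD1 h2 (abs_nonneg c₁)
            have := mul_le_mul h1 hD2 h3 hM0
            nlinarith [abs_nonneg (g t)]
        _ ≤ (1 + |c₁| + M) * dist y y' := by nlinarith
  have hcont : ∀ y : ℝ × ℝ, Continuous fun t => F t y := by
    intro y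
    exact (continuous_const).prodMk (continuous_const.add (hg.mul continuous_const))
  have hF0 : ∀ t, F t 0 = 0 := by
    intro t; simp [hFdef]
  obtain ⟨Y, hYa, hY⟩ := ode_global hlip hcont hF0 a (u₀, u₁)
  set w : ℝ → ℝ := fun t => (Y t).1 with hwdef
  set p : ℝ → ℝ := fun t => (Y t).2 with hpdef
  have hw : ∀ t, HasDerivAt w (p t) t := fun t =>
    (ContinuousLinearMap.fst ℝ ℝ ℝ).hasFDerivAt.comp_hasDerivAt t (hY t)
  have hp : ∀ t, HasDerivAt p (c₁ * w t + g t * p t) t := fun t =>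
    (ContinuousLinearMap.snd ℝ ℝ ℝ).hasFDerivAt.comp_hasDerivAt t (hY t)
  have hwdiff : Differentiable ℝ w := fun t => (hw t).differentiableAt
  have hpdiff : Differentiable ℝ p := fun t => (hp t).differentiableAt
  have hderivw : deriv w = p := funext fun t => (hw t).deriv
  have hderivp : deriv p = fun t => c₁ * w t + g t * p t := funext fun t => (hp t).deriv
  have hqcont : Continuous fun t => c₁ * w t + g t * p t :=
    (continuous_const.mul hwdiff.continuous).add (hg.mul hpdiff.continuous)
  refine ⟨w, ?_, ?_, ?_, ?_⟩
  · rw [show (2 : WithTop ℕ∞) = 1 + 1 by norm_num, contDiff_succ_iff_deriv]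
    refine ⟨hwdiff, by simp, ?_⟩
    rw [hderivw, contDiff_one_iff_deriv]
    exact ⟨hpdiff, by rw [hderivp]; exact hqcont⟩
  · simp [hwdef, hYa]
  · rw [hderivw]; simp [hpdef, hYa]
  · intro t; rw [hderivw, hderivp]


lemma deriv_differentiable_of_contDiff2 {w : ℝ → ℝ} (hw : ContDiff ℝ 2 w) :
    Differentiable ℝ (deriv w) := by
  have h2 : ContDiff ℝ ((1:ℕ∞) + 1) w := by exact_mod_cast hw
  exact (((contDiff_succ_iff_deriv (n := 1)).mp h2).2.2).differentiable (by norm_num)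

/-- Linear combinations of classical solutions are classical solutions. -/
lemma linear_ode_combo {c₁ : ℝ} {g w₁ w₂ : ℝ → ℝ}
    (h₁ : ContDiff ℝ 2 w₁) (h₂ : ContDiff ℝ 2 w₂)
    (he₁ : ∀ t, deriv (deriv w₁) t = c₁ * w₁ t + g t * deriv w₁ t)
    (he₂ : ∀ t, deriv (deriv w₂) t = c₁ * w₂ t + g t * deriv w₂ t)
    (c d : ℝ) :
    ContDiff ℝ 2 (fun t => c * w₁ t + d * w₂ t) ∧
    (∀ t, deriv (fun t => c * w₁ t + d * w₂ t) t = c * deriv w₁ t + d * deriv w₂ t) ∧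
    (∀ t, deriv (deriv (fun t => c * w₁ t + d * w₂ t)) t
      = c₁ * (c * w₁ t + d * w₂ t) + g t * deriv (fun t => c * w₁ t + d * w₂ t) t) := by
  have hd₁ : Differentiable ℝ w₁ := h₁.differentiable (by norm_num)
  have hd₂ : Differentiable ℝ w₂ := h₂.differentiable (by norm_num)
  have hdd₁ : Differentiable ℝ (deriv w₁) := deriv_differentiable_of_contDiff2 h₁
  have hdd₂ : Differentiable ℝ (deriv w₂) := deriv_differentiable_of_contDiff2 h₂
  have hD : deriv (fun t => c * w₁ t + d * w₂ t) = fun t => c * deriv w₁ t + d * deriv w₂ t := by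
    funext t
    rw [deriv_fun_add ((hd₁ t).const_mul c) ((hd₂ t).const_mul d),
      deriv_const_mul c (hd₁ t), deriv_const_mul d (hd₂ t)]
  refine ⟨(contDiff_const.mul h₁).add (contDiff_const.mul h₂), fun t => by rw [hD], fun t => ?_⟩
  rw [hD]
  rw [deriv_fun_add ((hdd₁ t).const_mul c) ((hdd₂ t).const_mul d),
    deriv_const_mul c (hdd₁ t), deriv_const_mul d (hdd₂ t), he₁ t, he₂ t]
  ring

/-- C² regularity on the continuation region: a continuous viscosity solution of
the linear equation `(μB - α((k-x)⁺)) v' + (s²/2) v'' - r v = 0` on a nonempty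
open interval `U` is twice continuously differentiable on `U`. -/
theorem viscosity_solution_C2_regularity
    (μ B s r k : ℝ) (hB : 0 < B) (hs : 0 < s) (hr : 0 < r)
    (α : ℝ → ℝ) (hα : Continuous α)
    (U : Set ℝ) (hUopen : IsOpen U) (hUne : U.Nonempty) (hUconn : U.OrdConnected)
    (v : ℝ → ℝ) (hv : ContinuousOn v U)
    (hvisc : ∀ x₀ ∈ U, ∀ φ : ℝ → ℝ, ContDiff ℝ 2 φ →
      (IsLocalMin (fun x => v x - φ x) x₀ →
        (μ * B - α (max (k - x₀) 0)) * deriv φ x₀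
          + s ^ 2 / 2 * deriv (deriv φ) x₀ - r * v x₀ ≤ 0) ∧
      (IsLocalMax (fun x => v x - φ x) x₀ →
        0 ≤ (μ * B - α (max (k - x₀) 0)) * deriv φ x₀
          + s ^ 2 / 2 * deriv (deriv φ) x₀ - r * v x₀)) :
    ContDiffOn ℝ 2 v U := by
  have hs2 : (0:ℝ) < s ^ 2 := by positivity
  -- it suffices to prove smoothness at each point
  suffices h : ∀ x₀ ∈ U, ContDiffAt ℝ 2 v x₀ by
    exact fun x hx => (h x hx).contDiffWithinAt
  intro x₀ hx₀
  obtain ⟨δ, hδ, hball⟩ := Metric.isOpen_iff.mp hUopen x₀ hx₀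
  set a : ℝ := x₀ - δ/2 with hadef
  set b : ℝ := x₀ + δ/2 with hbdef
  have hab : a < b := by simp only [hadef, hbdef]; linarith
  have hIccU : Icc a b ⊆ U := by
    intro x hx
    apply hball
    have h1 : x₀ - δ/2 ≤ x := hx.1
    have h2 : x ≤ x₀ + δ/2 := hx.2
    rw [mem_ball, Real.dist_eq, abs_lt]
    constructor <;> linarith
  -- clamped coefficient function
  set clamp : ℝ → ℝ := fun x => max a (min x b) with hclampdef
  have hclamp_mem : ∀ x, clamp x ∈ Icc a b := by
    intro x
    refine ⟨le_max_left _ _, max_le hab.le (min_le_right _ _)⟩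
  have hclamp_id : ∀ x ∈ Icc a b, clamp x = x := by
    intro x hx
    simp only [hclampdef]
    rw [min_eq_left hx.2, max_eq_right hx.1]
  set G : ℝ → ℝ := fun x => μ * B - α (max (k - clamp x) 0) with hGdef
  have hclampc : Continuous clamp := continuous_const.max (continuous_id.min continuous_const)
  have hGc : Continuous G :=
    continuous_const.sub (hα.comp ((continuous_const.sub hclampc).max continuous_const))
  -- boundedness
  obtain ⟨M₀, hM₀⟩ := isCompact_Icc.exists_bound_of_continuousOn
    (hGc.continuousOn : ContinuousOn G (Icc a b))
  have hGbd : ∀ x, |G x| ≤ M₀ := by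
    intro x
    have h1 : G x = G (clamp x) := by
      simp only [hGdef]
      rw [hclamp_id (clamp x) (hclamp_mem x)]
    rw [h1]
    exact hM₀ _ (hclamp_mem x)
  set c₁ : ℝ := 2 * r / s ^ 2 with hc₁def
  have hc₁ : 0 < c₁ := by positivity
  set g : ℝ → ℝ := fun t => -(2 / s ^ 2) * G t with hgdef
  have hgc : Continuous g := continuous_const.mul hGc
  have hgbd : ∀ x, |g x| ≤ (2 / s ^ 2) * M₀ := by
    intro x
    simp only [hgdef, abs_mul, abs_neg]
    rw [abs_of_pos (by positivity : (0:ℝ) < 2 / s ^ 2)]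
    exact mul_le_mul_of_nonneg_left (hGbd x) (by positivity)
  -- classical identity: the HJB expression for a classical solution
  have hHJB : ∀ (w : ℝ → ℝ), ContDiff ℝ 2 w →
      (∀ t, deriv (deriv w) t = c₁ * w t + g t * deriv w t) →
      ∀ x ∈ Icc a b,
      (μ * B - α (max (k - x) 0)) * deriv w x + s ^ 2 / 2 * deriv (deriv w) x
        = r * w x := by
    intro w hw heq x hx
    have h1 : μ * B - α (max (k - x) 0) = G x := by
      simp only [hGdef]
      rw [hclamp_id x hx]
    rw [h1, heq x]
    simp only [hc₁def, hgdef]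
    field_simp
    ring
  -- basis solutions
  obtain ⟨w₀, hw₀C, hw₀a, hw₀a', hw₀eq⟩ := linear_ode_exists hgc hgbd a 1 0
  obtain ⟨w₁, hw₁C, hw₁a, hw₁a', hw₁eq⟩ := linear_ode_exists hgc hgbd a 0 1
  -- nondegeneracy: w₁ b ≠ 0
  have hne : w₁ b ≠ 0 := by
    intro hb0
    have hpos : ∀ x ∈ Icc a b, w₁ x ≤ 0 :=
      linear_max_principle hc₁ hw₁C hw₁eq hab.le (le_of_eq hw₁a) (le_of_eq hb0)
    have hneg : ∀ x ∈ Icc a b, -w₁ x ≤ 0 := by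
      obtain ⟨hC, hD, hE⟩ := linear_ode_combo hw₁C hw₀C hw₁eq hw₀eq (-1) 0
      have := linear_max_principle hc₁ hC hE hab.le
        (by simp [hw₁a]) (by simp [hb0])
      intro x hx
      have h := this x hx
      simpa using h
    have hzero : ∀ x ∈ Icc a b, w₁ x = 0 := fun x hx =>
      le_antisymm (hpos x hx) (by linarith [hneg x hx])
    have hdzero : EqOn (deriv w₁) (fun _ => (0:ℝ)) (Ioo a b) := by
      intro t ht
      have hev : w₁ =ᶠ[𝓝 t] fun _ => (0:ℝ) :=
        eventuallyEq_of_mem (Ioo_mem_nhds ht.1 ht.2)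
          (fun x hx => hzero x (Ioo_subset_Icc_self hx))
      rw [hev.deriv_eq, deriv_const]
    have hdcont : Continuous (deriv w₁) := (deriv_differentiable_of_contDiff2 hw₁C).continuous
    have hclos : EqOn (deriv w₁) (fun _ => (0:ℝ)) (closure (Ioo a b)) :=
      hdzero.closure hdcont continuous_const
    rw [closure_Ioo hab.ne] at hclos
    have : deriv w₁ a = 0 := hclos (left_mem_Icc.mpr hab.le)
    rw [hw₁a'] at this
    exact one_ne_zero this
  -- the classical solution matching v at a and b
  set cc : ℝ := (v b - v a * w₀ b) / w₁ b with hccdef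
  obtain ⟨hwC, hwD, hwE⟩ := linear_ode_combo hw₀C hw₁C hw₀eq hw₁eq (v a) cc
  set w : ℝ → ℝ := fun t => v a * w₀ t + cc * w₁ t with hwdef
  have hwa : w a = v a := by simp [hwdef, hw₀a, hw₁a]
  have hwb : w b = v b := by
    have h2 : cc * w₁ b = v b - v a * w₀ b := by
      rw [hccdef]; field_simp
    simp only [hwdef]
    rw [h2]; ring
  have hwcont : Continuous w := hwC.continuous
  -- comparison: v ≤ w on Icc a b
  have hucont : ContinuousOn (fun x => v x - w x) (Icc a b) :=
    (hv.mono hIccU).sub hwcont.continuousOn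
  have hkey : ∀ x' ∈ Ioo a b, ∀ d : ℝ,
      ((μ * B - α (max (k - x') 0)) * deriv w x' + s ^ 2 / 2 * deriv (deriv w) x'
        - r * v x') = r * w x' - r * v x' := by
    intro x' hx' d
    rw [hHJB w hwC hwE x' (Ioo_subset_Icc_self hx')]
  have hle : ∀ x ∈ Icc a b, v x - w x ≤ 0 := by
    obtain ⟨x', hx'mem, hx'⟩ := isCompact_Icc.exists_isMaxOn (nonempty_Icc.mpr hab.le) hucont
    intro x hx
    have hbnd : v x - w x ≤ v x' - w x' := hx' hx
    rcases eq_or_lt_of_le hx'mem.1 with h | h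
    · rw [← h] at hbnd; rw [hwa] at hbnd; linarith
    rcases eq_or_lt_of_le hx'mem.2 with h' | h'
    · rw [h'] at hbnd; rw [hwb] at hbnd; linarith
    have hloc : IsLocalMax (fun x => v x - w x) x' :=
      hx'.isLocalMax (Icc_mem_nhds h h')
    have h0 := (hvisc x' (hIccU hx'mem) w hwC).2 hloc
    rw [hkey x' ⟨h, h'⟩ 0] at h0
    have : v x' - w x' ≤ 0 := by nlinarith
    linarith
  have hge : ∀ x ∈ Icc a b, 0 ≤ v x - w x := by
    obtain ⟨x', hx'mem, hx'⟩ := isCompact_Icc.exists_isMinOn (nonempty_Icc.mpr hab.le) hucont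
    intro x hx
    have hbnd : v x' - w x' ≤ v x - w x := hx' hx
    rcases eq_or_lt_of_le hx'mem.1 with h | h
    · rw [← h] at hbnd; rw [hwa] at hbnd; linarith
    rcases eq_or_lt_of_le hx'mem.2 with h' | h'
    · rw [h'] at hbnd; rw [hwb] at hbnd; linarith
    have hloc : IsLocalMin (fun x => v x - w x) x' :=
      hx'.isLocalMin (Icc_mem_nhds h h')
    have h0 := (hvisc x' (hIccU hx'mem) w hwC).1 hloc
    rw [hkey x' ⟨h, h'⟩ 0] at h0
    have : 0 ≤ v x' - w x' := by nlinarith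
    linarith
  have heq : EqOn v w (Icc a b) := fun x hx =>
    le_antisymm (by linarith [hle x hx]) (by linarith [hge x hx])
  have hmem : Icc a b ∈ 𝓝 x₀ := Icc_mem_nhds (by simp [hadef]; linarith) (by simp [hbdef]; linarith)
  exact hwC.contDiffAt.congr_of_eventuallyEq (eventuallyEq_of_mem hmem heq)
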